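/- Smoking–genotype model, key conditional factorization: P(W=w | Y=y, Z=z) = Σ_x P(W=w | X=x, Z=z) P(X=x | Y=y), in the model X = φ₀(U₀), Y = φ₁(X,U₁), Z = φ₂(Y,U₂), W = φ₃(X,Z,U₃) with the U_i independent. -/

import Mathlib

open MeasureTheory ProbabilityTheory
open scoped ENNReal

/-- Smoking–genotype model, key conditional factorization:
`P(W=w | Y=y, Z=z) = Σ_x P(W=w | X=x, Z=z) P(X=x | Y=y)` in the model
`X = φ₀(U₀)`, `Y = φ₁(X,U₁)`, `Z = φ₂(Y,U₂)`, `W = φ₃(X,Z,U₃)` with the `Uᵢ`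
independent. -/
theorem smoking_genotype_factorization
    {Ω 𝒳 𝒴 𝒵 𝒲 : Type*} [MeasurableSpace Ω]
    [MeasurableSpace 𝒳] [MeasurableSingletonClass 𝒳] [Countable 𝒳]
    [MeasurableSpace 𝒴] [MeasurableSingletonClass 𝒴] [Countable 𝒴]
    [MeasurableSpace 𝒵] [MeasurableSingletonClass 𝒵] [Countable 𝒵]
    [MeasurableSpace 𝒲] [MeasurableSingletonClass 𝒲] [Countable 𝒲]
    (μ : Measure Ω) [IsProbabilityMeasure μ]
    (U : Fin 4 → Ω → ℝ) (hU : ∀ i, Measurable (U i))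
    (hindep : iIndepFun (m := fun _ => (inferInstance : MeasurableSpace ℝ)) U μ)
    (φ₀ : ℝ → 𝒳) (φ₁ : 𝒳 → ℝ → 𝒴) (φ₂ : 𝒴 → ℝ → 𝒵) (φ₃ : 𝒳 → 𝒵 → ℝ → 𝒲)
    (hφ₀ : Measurable φ₀)
    (hφ₁ : Measurable fun p : 𝒳 × ℝ => φ₁ p.1 p.2)
    (hφ₂ : Measurable fun p : 𝒴 × ℝ => φ₂ p.1 p.2)
    (hφ₃ : Measurable fun p : 𝒳 × 𝒵 × ℝ => φ₃ p.1 p.2.1 p.2.2)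
    (X : Ω → 𝒳) (hX : ∀ ω, X ω = φ₀ (U 0 ω))
    (Y : Ω → 𝒴) (hY : ∀ ω, Y ω = φ₁ (X ω) (U 1 ω))
    (Z : Ω → 𝒵) (hZ : ∀ ω, Z ω = φ₂ (Y ω) (U 2 ω))
    (W : Ω → 𝒲) (hW : ∀ ω, W ω = φ₃ (X ω) (Z ω) (U 3 ω))
    (y : 𝒴) (z : 𝒵) (w : 𝒲)
    (hposYZ : 0 < μ {ω | Y ω = y ∧ Z ω = z})
    (hposY : 0 < μ {ω | Y ω = y})
    (hposXZ : ∀ x : 𝒳, 0 < μ {ω | X ω = x ∧ Z ω = z}) :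
    μ[|{ω | Y ω = y ∧ Z ω = z}] {ω | W ω = w}
      = ∑' x : 𝒳, μ[|{ω | X ω = x ∧ Z ω = z}] {ω | W ω = w} *
          μ[|{ω | Y ω = y}] {ω | X ω = x} := by
  classical
  -- measurability of the random variables
  have hXm : Measurable X := by
    have : X = fun ω => φ₀ (U 0 ω) := funext hX
    rw [this]; exact hφ₀.comp (hU 0)
  have hYm : Measurable Y := by
    have : Y = fun ω => φ₁ (X ω) (U 1 ω) := funext hY
    rw [this]; exact hφ₁.comp (hXm.prodMk (hU 1))
  have hZm : Measurable Z := by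
    have : Z = fun ω => φ₂ (Y ω) (U 2 ω) := funext hZ
    rw [this]; exact hφ₂.comp (hYm.prodMk (hU 2))
  have hWm : Measurable W := by
    have : W = fun ω => φ₃ (X ω) (Z ω) (U 3 ω) := funext hW
    rw [this]; exact hφ₃.comp (hXm.prodMk (hZm.prodMk (hU 3)))
  -- the two independence facts we need
  have h01_2 : IndepFun (fun ω => (U 0 ω, U 1 ω)) (U 2) μ :=
    hindep.indepFun_prodMk hU 0 1 2 (by decide) (by decide)
  have h012_3 : IndepFun (fun ω => (U 0 ω, U 1 ω, U 2 ω)) (U 3) μ := by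
    have h := hindep.indepFun_finset {0, 1, 2} {3} (by decide) hU
    have h0 : (0 : Fin 4) ∈ ({0, 1, 2} : Finset (Fin 4)) := by decide
    have h1 : (1 : Fin 4) ∈ ({0, 1, 2} : Finset (Fin 4)) := by decide
    have h2 : (2 : Fin 4) ∈ ({0, 1, 2} : Finset (Fin 4)) := by decide
    have h3 : (3 : Fin 4) ∈ ({3} : Finset (Fin 4)) := by decide
    have := h.comp
      (φ := fun v : (i : ({0, 1, 2} : Finset (Fin 4))) → ℝ =>
        (v ⟨0, h0⟩, v ⟨1, h1⟩, v ⟨2, h2⟩))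
      (ψ := fun v : (i : ({3} : Finset (Fin 4))) → ℝ => v ⟨3, h3⟩)
      ((measurable_pi_apply _).prodMk ((measurable_pi_apply _).prodMk (measurable_pi_apply _)) : Measurable (fun v : (i : ({0, 1, 2} : Finset (Fin 4))) → ℝ => (v ⟨0, h0⟩, v ⟨1, h1⟩, v ⟨2, h2⟩))) (measurable_pi_apply _ : Measurable (fun v : (i : ({3} : Finset (Fin 4))) → ℝ => v ⟨3, h3⟩))
    exact this
  -- the two key probabilities
  set p₂ : ℝ≥0∞ := μ ((U 2) ⁻¹' (φ₂ y ⁻¹' {z})) with hp₂def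
  set p₃ : 𝒳 → ℝ≥0∞ := fun x => μ ((U 3) ⁻¹' (φ₃ x z ⁻¹' {w})) with hp₃def
  -- auxiliary measurable functions on ℝ × ℝ × ℝ
  have hXfun : Measurable fun p : ℝ × ℝ × ℝ => φ₀ p.1 := hφ₀.comp measurable_fst
  have hYfun3 : Measurable fun p : ℝ × ℝ × ℝ => φ₁ (φ₀ p.1) p.2.1 :=
    hφ₁.comp (hXfun.prodMk (measurable_fst.comp measurable_snd))
  have hZfun : Measurable fun p : ℝ × ℝ × ℝ => φ₂ (φ₁ (φ₀ p.1) p.2.1) p.2.2 :=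
    hφ₂.comp (hYfun3.prodMk (measurable_snd.comp measurable_snd))
  have hYfun2 : Measurable fun p : ℝ × ℝ => φ₁ (φ₀ p.1) p.2 :=
    hφ₁.comp ((hφ₀.comp measurable_fst).prodMk measurable_snd)
  have hW3 : ∀ x : 𝒳, Measurable (φ₃ x z) := fun x =>
    hφ₃.comp (measurable_const.prodMk (measurable_const.prodMk measurable_id))
  -- factorization (F2): quadruple event
  have F2 : ∀ x : 𝒳, μ {ω | X ω = x ∧ Y ω = y ∧ Z ω = z ∧ W ω = w}
      = μ {ω | X ω = x ∧ Y ω = y ∧ Z ω = z} * p₃ x := by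
    intro x
    have hset : {ω | X ω = x ∧ Y ω = y ∧ Z ω = z ∧ W ω = w}
        = (fun ω => (U 0 ω, U 1 ω, U 2 ω)) ⁻¹'
            {p : ℝ × ℝ × ℝ | φ₀ p.1 = x ∧ φ₁ (φ₀ p.1) p.2.1 = y
              ∧ φ₂ (φ₁ (φ₀ p.1) p.2.1) p.2.2 = z}
          ∩ (U 3) ⁻¹' (φ₃ x z ⁻¹' {w}) := by
      ext ω
      simp only [Set.mem_setOf_eq, Set.mem_inter_iff, Set.mem_preimage, Set.mem_singleton_iff]
      constructor
      · rintro ⟨hx, hy, hz, hw⟩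
        rw [hX ω] at hx; rw [hY ω, hX ω] at hy; rw [hZ ω, hY ω, hX ω] at hz
        refine ⟨⟨hx, hy, hz⟩, ?_⟩
        rw [hW ω] at hw
        rw [hX ω, hx] at hw
        rw [hZ ω, hY ω, hX ω, hz] at hw
        exact hw
      · rintro ⟨⟨hx, hy, hz⟩, hw⟩
        have hx' : X ω = x := by rw [hX ω]; exact hx
        have hy' : Y ω = y := by rw [hY ω, hX ω]; exact hy
        have hz' : Z ω = z := by rw [hZ ω, hY ω, hX ω]; exact hz
        refine ⟨hx', hy', hz', ?_⟩
        rw [hW ω, hx', hz']; exact hw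
    have hset' : {ω | X ω = x ∧ Y ω = y ∧ Z ω = z}
        = (fun ω => (U 0 ω, U 1 ω, U 2 ω)) ⁻¹'
            {p : ℝ × ℝ × ℝ | φ₀ p.1 = x ∧ φ₁ (φ₀ p.1) p.2.1 = y
              ∧ φ₂ (φ₁ (φ₀ p.1) p.2.1) p.2.2 = z} := by
      ext ω
      simp only [Set.mem_setOf_eq, Set.mem_preimage]
      constructor
      · rintro ⟨hx, hy, hz⟩
        rw [hX ω] at hx; rw [hY ω, hX ω] at hy; rw [hZ ω, hY ω, hX ω] at hz
        exact ⟨hx, hy, hz⟩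
      · rintro ⟨hx, hy, hz⟩
        exact ⟨by rw [hX ω]; exact hx, by rw [hY ω, hX ω]; exact hy,
          by rw [hZ ω, hY ω, hX ω]; exact hz⟩
    rw [hset, hset']
    exact h012_3.measure_inter_preimage_eq_mul _ _
      (((hXfun (measurableSet_singleton x)).inter (hYfun3 (measurableSet_singleton y))).inter
        (hZfun (measurableSet_singleton z)) |>.congr (by ext p; simp [and_assoc]))
      (hW3 x (measurableSet_singleton w))
  -- factorization (F1): `{X = x, Z = z, W = w}`
  have F1 : ∀ x : 𝒳, μ {ω | (X ω = x ∧ Z ω = z) ∧ W ω = w}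
      = μ {ω | X ω = x ∧ Z ω = z} * p₃ x := by
    intro x
    have hset : {ω | (X ω = x ∧ Z ω = z) ∧ W ω = w}
        = (fun ω => (U 0 ω, U 1 ω, U 2 ω)) ⁻¹'
            {p : ℝ × ℝ × ℝ | φ₀ p.1 = x ∧ φ₂ (φ₁ (φ₀ p.1) p.2.1) p.2.2 = z}
          ∩ (U 3) ⁻¹' (φ₃ x z ⁻¹' {w}) := by
      ext ω
      simp only [Set.mem_setOf_eq, Set.mem_inter_iff, Set.mem_preimage, Set.mem_singleton_iff]
      constructor
      · rintro ⟨⟨hx, hz⟩, hw⟩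
        have hx0 : φ₀ (U 0 ω) = x := by rw [← hX ω]; exact hx
        have hz0 : φ₂ (φ₁ (φ₀ (U 0 ω)) (U 1 ω)) (U 2 ω) = z := by
          rw [← hX ω, ← hY ω, ← hZ ω]; exact hz
        refine ⟨⟨hx0, hz0⟩, ?_⟩
        rw [hW ω, hx, hz] at hw; exact hw
      · rintro ⟨⟨hx, hz⟩, hw⟩
        have hx' : X ω = x := by rw [hX ω]; exact hx
        have hz' : Z ω = z := by rw [hZ ω, hY ω, hX ω]; exact hz
        exact ⟨⟨hx', hz'⟩, by rw [hW ω, hx', hz']; exact hw⟩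
    have hset' : {ω | X ω = x ∧ Z ω = z}
        = (fun ω => (U 0 ω, U 1 ω, U 2 ω)) ⁻¹'
            {p : ℝ × ℝ × ℝ | φ₀ p.1 = x ∧ φ₂ (φ₁ (φ₀ p.1) p.2.1) p.2.2 = z} := by
      ext ω
      simp only [Set.mem_setOf_eq, Set.mem_preimage]
      constructor
      · rintro ⟨hx, hz⟩
        exact ⟨by rw [← hX ω]; exact hx, by rw [← hX ω, ← hY ω, ← hZ ω]; exact hz⟩
      · rintro ⟨hx, hz⟩
        exact ⟨by rw [hX ω]; exact hx, by rw [hZ ω, hY ω, hX ω]; exact hz⟩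
    rw [hset, hset']
    exact h012_3.measure_inter_preimage_eq_mul _ _
      ((hXfun (measurableSet_singleton x)).inter (hZfun (measurableSet_singleton z)))
      (hW3 x (measurableSet_singleton w))
  -- factorization (F3): `{X = x, Y = y, Z = z}`
  have F3 : ∀ x : 𝒳, μ {ω | X ω = x ∧ Y ω = y ∧ Z ω = z}
      = μ {ω | X ω = x ∧ Y ω = y} * p₂ := by
    intro x
    have hset : {ω | X ω = x ∧ Y ω = y ∧ Z ω = z}
        = (fun ω => (U 0 ω, U 1 ω)) ⁻¹'
            {p : ℝ × ℝ | φ₀ p.1 = x ∧ φ₁ (φ₀ p.1) p.2 = y}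
          ∩ (U 2) ⁻¹' (φ₂ y ⁻¹' {z}) := by
      ext ω
      simp only [Set.mem_setOf_eq, Set.mem_inter_iff, Set.mem_preimage, Set.mem_singleton_iff]
      constructor
      · rintro ⟨hx, hy, hz⟩
        refine ⟨⟨by rw [← hX ω]; exact hx, by rw [← hX ω, ← hY ω]; exact hy⟩, ?_⟩
        rw [hZ ω, hy] at hz; exact hz
      · rintro ⟨⟨hx, hy⟩, hz⟩
        have hx' : X ω = x := by rw [hX ω]; exact hx
        have hy' : Y ω = y := by rw [hY ω, hX ω]; exact hy
        exact ⟨hx', hy', by rw [hZ ω, hy']; exact hz⟩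
    have hset' : {ω | X ω = x ∧ Y ω = y}
        = (fun ω => (U 0 ω, U 1 ω)) ⁻¹'
            {p : ℝ × ℝ | φ₀ p.1 = x ∧ φ₁ (φ₀ p.1) p.2 = y} := by
      ext ω
      simp only [Set.mem_setOf_eq, Set.mem_preimage]
      constructor
      · rintro ⟨hx, hy⟩
        exact ⟨by rw [← hX ω]; exact hx, by rw [← hX ω, ← hY ω]; exact hy⟩
      · rintro ⟨hx, hy⟩
        exact ⟨by rw [hX ω]; exact hx, by rw [hY ω, hX ω]; exact hy⟩
    rw [hset, hset']
    exact h01_2.measure_inter_preimage_eq_mul _ _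
      (((hφ₀.comp measurable_fst) (measurableSet_singleton x)).inter
        (hYfun2 (measurableSet_singleton y)))
      ((hφ₂.comp (measurable_const.prodMk measurable_id) : Measurable (φ₂ y))
        (measurableSet_singleton z))
  -- factorization (F4): `{Y = y, Z = z}`
  have F4 : μ {ω | Y ω = y ∧ Z ω = z} = μ {ω | Y ω = y} * p₂ := by
    have hset : {ω | Y ω = y ∧ Z ω = z}
        = (fun ω => (U 0 ω, U 1 ω)) ⁻¹' {p : ℝ × ℝ | φ₁ (φ₀ p.1) p.2 = y}
          ∩ (U 2) ⁻¹' (φ₂ y ⁻¹' {z}) := by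
      ext ω
      simp only [Set.mem_setOf_eq, Set.mem_inter_iff, Set.mem_preimage, Set.mem_singleton_iff]
      constructor
      · rintro ⟨hy, hz⟩
        refine ⟨by rw [← hX ω, ← hY ω]; exact hy, ?_⟩
        rw [hZ ω, hy] at hz; exact hz
      · rintro ⟨hy, hz⟩
        have hy' : Y ω = y := by rw [hY ω, hX ω]; exact hy
        exact ⟨hy', by rw [hZ ω, hy']; exact hz⟩
    have hset' : {ω | Y ω = y}
        = (fun ω => (U 0 ω, U 1 ω)) ⁻¹' {p : ℝ × ℝ | φ₁ (φ₀ p.1) p.2 = y} := by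
      ext ω
      simp only [Set.mem_setOf_eq, Set.mem_preimage]
      constructor
      · intro hy; rw [← hX ω, ← hY ω]; exact hy
      · intro hy; rw [hY ω, hX ω]; exact hy
    rw [hset, hset']
    exact h01_2.measure_inter_preimage_eq_mul _ _
      (hYfun2 (measurableSet_singleton y))
      ((hφ₂.comp (measurable_const.prodMk measurable_id) : Measurable (φ₂ y))
        (measurableSet_singleton z))
  -- nonzero / finiteness facts
  have hμYZ0 : μ {ω | Y ω = y ∧ Z ω = z} ≠ 0 := hposYZ.ne'
  have hμY0 : μ {ω | Y ω = y} ≠ 0 := hposY.ne'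
  have fin : ∀ s : Set Ω, μ s ≠ ⊤ := fun s => (measure_lt_top μ s).ne
  have hp₂0 : p₂ ≠ 0 := by
    intro h; apply hμYZ0; rw [F4, h, mul_zero]
  have hp₂top : p₂ ≠ ⊤ := fin _
  -- measurable sets
  have hYZmeas : MeasurableSet {ω | Y ω = y ∧ Z ω = z} := by
    have : {ω | Y ω = y ∧ Z ω = z} = Y ⁻¹' {y} ∩ Z ⁻¹' {z} := by ext ω; simp [Set.mem_inter_iff]
    rw [this]
    exact (hYm (measurableSet_singleton y)).inter (hZm (measurableSet_singleton z))
  have hYmeas : MeasurableSet {ω | Y ω = y} := hYm (measurableSet_singleton y)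
  have hXZmeas : ∀ x : 𝒳, MeasurableSet {ω | X ω = x ∧ Z ω = z} := by
    intro x
    have : {ω | X ω = x ∧ Z ω = z} = X ⁻¹' {x} ∩ Z ⁻¹' {z} := by ext ω; simp [Set.mem_inter_iff]
    rw [this]
    exact (hXm (measurableSet_singleton x)).inter (hZm (measurableSet_singleton z))
  -- decompose the LHS numerator over the value of X
  have hdecomp : μ ({ω | Y ω = y ∧ Z ω = z} ∩ {ω | W ω = w})
      = ∑' x : 𝒳, μ {ω | X ω = x ∧ Y ω = y ∧ Z ω = z ∧ W ω = w} := by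
    have hunion : {ω | Y ω = y ∧ Z ω = z} ∩ {ω | W ω = w}
        = ⋃ x : 𝒳, {ω | X ω = x ∧ Y ω = y ∧ Z ω = z ∧ W ω = w} := by
      ext ω
      simp only [Set.mem_inter_iff, Set.mem_setOf_eq, Set.mem_iUnion]
      constructor
      · rintro ⟨⟨hy, hz⟩, hw⟩; exact ⟨X ω, rfl, hy, hz, hw⟩
      · rintro ⟨x, _, hy, hz, hw⟩; exact ⟨⟨hy, hz⟩, hw⟩
    rw [hunion]
    refine measure_iUnion ?_ ?_
    · intro x x' hxx'
      refine Set.disjoint_left.2 ?_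
      rintro ω ⟨hx, _⟩ ⟨hx', _⟩
      exact hxx' (hx ▸ hx')
    · intro x
      have : {ω | X ω = x ∧ Y ω = y ∧ Z ω = z ∧ W ω = w}
          = X ⁻¹' {x} ∩ (Y ⁻¹' {y} ∩ (Z ⁻¹' {z} ∩ W ⁻¹' {w})) := by
        ext ω; simp [Set.mem_inter_iff, and_assoc]
      rw [this]
      exact (hXm (measurableSet_singleton x)).inter
        ((hYm (measurableSet_singleton y)).inter
          ((hZm (measurableSet_singleton z)).inter (hWm (measurableSet_singleton w))))
  -- now compute both sides
  rw [cond_apply hYZmeas, hdecomp, ← ENNReal.tsum_mul_left]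
  refine tsum_congr fun x => ?_
  have hμXZ0 : μ {ω | X ω = x ∧ Z ω = z} ≠ 0 := (hposXZ x).ne'
  rw [cond_apply (hXZmeas x), cond_apply hYmeas]
  have hXZW : {ω | X ω = x ∧ Z ω = z} ∩ {ω | W ω = w}
      = {ω | (X ω = x ∧ Z ω = z) ∧ W ω = w} := by
    ext ω; simp [Set.mem_inter_iff, Set.mem_setOf_eq]
  have hYX : {ω | Y ω = y} ∩ {ω | X ω = x} = {ω | X ω = x ∧ Y ω = y} := by
    ext ω; simp [Set.mem_inter_iff, Set.mem_setOf_eq, and_comm]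
  rw [hXZW, hYX, F1 x, F2 x, F3 x, F4]
  -- pure `ℝ≥0∞` arithmetic now
  have key : (μ {ω | X ω = x ∧ Z ω = z})⁻¹ * (μ {ω | X ω = x ∧ Z ω = z} * p₃ x) = p₃ x := by
    rw [← mul_assoc, ENNReal.inv_mul_cancel hμXZ0 (fin _), one_mul]
  rw [key]
  rw [ENNReal.mul_inv (Or.inl hμY0) (Or.inl (fin _))]
  calc (μ {ω | Y ω = y})⁻¹ * p₂⁻¹ * (μ {ω | X ω = x ∧ Y ω = y} * p₂ * p₃ x)
      = (p₂⁻¹ * p₂) * ((μ {ω | Y ω = y})⁻¹ * (μ {ω | X ω = x ∧ Y ω = y} * p₃ x)) := by ring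
    _ = p₃ x * ((μ {ω | Y ω = y})⁻¹ * μ {ω | X ω = x ∧ Y ω = y}) := by
        rw [ENNReal.inv_mul_cancel hp₂0 hp₂top, one_mul]; ring
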